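/- If F and G are cumulative distribution functions on the reals, then the closures of their ranges are equal if and only if F(F^{-1}(t)) = G(G^{-1}(t)) for Lebesgue-almost all t in (0,1), where F^{-1}(t) = inf{x : F(x) >= t} denotes the generalized inverse. -/

import Mathlib

open MeasureTheory Set

/-- Generalized inverse (quantile function) of a distribution function. -/
noncomputable def quantile (F : ℝ → ℝ) (t : ℝ) : ℝ := sInf {x : ℝ | t ≤ F x}

/-- `F` is a cumulative distribution function on `ℝ`. -/
structure IsCDF (F : ℝ → ℝ) : Prop where
  mono : Monotone F
  rightCont : ∀ x, ContinuousWithinAt F (Set.Ici x) x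
  tendsto_bot : Filter.Tendsto F Filter.atBot (nhds 0)
  tendsto_top : Filter.Tendsto F Filter.atTop (nhds 1)

namespace CDFAux

variable {F G : ℝ → ℝ} {t x : ℝ}

lemma apply_mem_Icc (hF : IsCDF F) (x : ℝ) : F x ∈ Set.Icc (0:ℝ) 1 := by
  constructor
  · exact le_of_tendsto hF.tendsto_bot (Filter.eventually_atBot.2 ⟨x, fun y hy => hF.mono hy⟩)
  · exact ge_of_tendsto hF.tendsto_top (Filter.eventually_atTop.2 ⟨x, fun y hy => hF.mono hy⟩)

lemma zero_mem (hF : IsCDF F) : (0:ℝ) ∈ closure (Set.range F) :=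
  mem_closure_of_tendsto hF.tendsto_bot (Filter.Eventually.of_forall fun x => mem_range_self x)

lemma one_mem (hF : IsCDF F) : (1:ℝ) ∈ closure (Set.range F) :=
  mem_closure_of_tendsto hF.tendsto_top (Filter.Eventually.of_forall fun x => mem_range_self x)

lemma closure_subset (hF : IsCDF F) : closure (Set.range F) ⊆ Set.Icc (0:ℝ) 1 :=
  closure_minimal (range_subset_iff.2 (apply_mem_Icc hF)) isClosed_Icc

lemma bddBelow_setOf (hF : IsCDF F) (ht0 : 0 < t) : BddBelow {x : ℝ | t ≤ F x} := by
  obtain ⟨x₀, hx₀⟩ := Filter.eventually_atBot.1 (hF.tendsto_bot.eventually (gt_mem_nhds ht0))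
  refine ⟨x₀, fun x hx => ?_⟩
  by_contra hlt
  push_neg at hlt
  exact absurd hx (not_le.2 (hx₀ x hlt.le))

lemma nonempty_setOf (hF : IsCDF F) (ht1 : t < 1) : {x : ℝ | t ≤ F x}.Nonempty := by
  obtain ⟨x, hx⟩ := (hF.tendsto_top.eventually (lt_mem_nhds ht1)).exists
  exact ⟨x, hx.le⟩

lemma le_apply_quantile (hF : IsCDF F) (ht0 : 0 < t) (ht1 : t < 1) : t ≤ F (quantile F t) := by
  set q := quantile F t with hq
  have hIoi : ∀ y, q < y → t ≤ F y := by
    intro y hy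
    obtain ⟨x, hx, hxy⟩ := exists_lt_of_csInf_lt (nonempty_setOf hF ht1) hy
    exact le_trans hx (hF.mono hxy.le)
  have htd : Filter.Tendsto F (nhdsWithin q (Set.Ioi q)) (nhds (F q)) :=
    (hF.rightCont q).mono_left (nhdsWithin_mono q Ioi_subset_Ici_self)
  exact ge_of_tendsto htd (eventually_mem_nhdsWithin.mono fun y hy => hIoi y hy)

lemma apply_quantile_le (hF : IsCDF F) (ht0 : 0 < t) (hx : t ≤ F x) :
    F (quantile F t) ≤ F x :=
  hF.mono (csInf_le (bddBelow_setOf hF ht0) hx)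

/-- `sInf (S ∩ [t, ∞))`, the "next point of `S` at or after `t`". -/
noncomputable def psi (S : Set ℝ) (t : ℝ) : ℝ := sInf (S ∩ Set.Ici t)

lemma psi_le {S : Set ℝ} (hx : x ∈ S) (htx : t ≤ x) : psi S t ≤ x :=
  csInf_le ⟨t, fun _ hy => hy.2⟩ ⟨hx, htx⟩

lemma le_psi {S : Set ℝ} (h : (S ∩ Set.Ici t).Nonempty) : t ≤ psi S t :=
  le_csInf h fun _ hy => hy.2

lemma apply_quantile_mem (hF : IsCDF F) (ht0 : 0 < t) (ht1 : t < 1) :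
    F (quantile F t) ∈ closure (Set.range F) ∩ Set.Ici t :=
  ⟨subset_closure (mem_range_self _), le_apply_quantile hF ht0 ht1⟩

lemma psi_le_apply_quantile (hF : IsCDF F) (ht0 : 0 < t) (ht1 : t < 1) :
    psi (closure (Set.range F)) t ≤ F (quantile F t) :=
  psi_le (apply_quantile_mem hF ht0 ht1).1 (apply_quantile_mem hF ht0 ht1).2

/-- The "gap" property of bad points: if `psi` differs from `F ∘ quantile F` at `t`, then
`(t, F (quantile F t))` misses the closure of the range, and `t` is in the closure. -/
lemma bad_gap (hF : IsCDF F) (ht0 : 0 < t) (ht1 : t < 1)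
    (hne : psi (closure (Set.range F)) t ≠ F (quantile F t)) :
    t ∈ closure (Set.range F) ∧ ∀ y ∈ closure (Set.range F), t < y → F (quantile F t) ≤ y := by
  set S := closure (Set.range F) with hS
  have hgap : ∀ y ∈ S, t < y → F (quantile F t) ≤ y := by
    intro y hy hty
    by_contra hlt
    push_neg at hlt
    obtain ⟨z, hz1, hz2⟩ := (_root_.mem_closure_iff.1 hy) (Set.Ioo t (F (quantile F t)))
      isOpen_Ioo ⟨hty, hlt⟩
    obtain ⟨x, rfl⟩ := hz2
    exact absurd (apply_quantile_le hF ht0 hz1.1.le) (not_le.2 hz1.2)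
  refine ⟨?_, hgap⟩
  by_contra htS
  apply hne
  refine le_antisymm (psi_le_apply_quantile hF ht0 ht1) (le_csInf ⟨_, apply_quantile_mem hF ht0 ht1⟩ ?_)
  rintro y ⟨hyS, hty⟩
  rcases eq_or_lt_of_le (show t ≤ y from hty) with rfl | h
  · exact absurd hyS htS
  · exact hgap y hyS h

lemma bad_countable (hF : IsCDF F) :
    {t ∈ Set.Ioo (0:ℝ) 1 | psi (closure (Set.range F)) t ≠ F (quantile F t)}.Countable := by
  set S := closure (Set.range F) with hS
  set B := {t ∈ Set.Ioo (0:ℝ) 1 | psi S t ≠ F (quantile F t)} with hB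
  have key : ∀ t ∈ B, t ∈ S ∧ t < F (quantile F t) ∧
      ∀ y ∈ S, t < y → F (quantile F t) ≤ y := by
    rintro t ⟨⟨ht0, ht1⟩, hne⟩
    obtain ⟨htS, hgap⟩ := bad_gap hF ht0 ht1 hne
    refine ⟨htS, ?_, hgap⟩
    rcases eq_or_lt_of_le (le_apply_quantile hF ht0 ht1) with heq | h
    · have hle : psi S t ≤ t := psi_le htS le_rfl
      have hge : t ≤ psi S t := le_psi ⟨_, apply_quantile_mem hF ht0 ht1⟩
      exact absurd ((le_antisymm hle hge).trans heq) hne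
    · exact h
  apply Set.PairwiseDisjoint.countable_of_Ioo (y := fun t => F (quantile F t))
    (fun t₁ ht₁ t₂ ht₂ hne12 => ?_) (fun t ht => (key t ht).2.1)
  obtain ⟨h1S, h1lt, h1gap⟩ := key t₁ ht₁
  obtain ⟨h2S, h2lt, h2gap⟩ := key t₂ ht₂
  rcases lt_or_gt_of_ne hne12 with h12 | h12
  · have : F (quantile F t₁) ≤ t₂ := by
      by_contra hc
      push_neg at hc
      exact absurd (h1gap t₂ h2S h12) (not_le.2 hc)
    exact Set.disjoint_left.2 fun z hz1 hz2 =>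
      absurd hz2.1 (not_lt.2 (hz1.2.le.trans this))
  · have : F (quantile F t₂) ≤ t₁ := by
      by_contra hc
      push_neg at hc
      exact absurd (h2gap t₁ h1S h12) (not_le.2 hc)
    exact Set.disjoint_left.2 fun z hz1 hz2 =>
      absurd hz1.1 (not_lt.2 (hz2.2.le.trans this))

lemma ae_eq_psi (hF : IsCDF F) :
    ∀ᵐ t ∂(volume : Measure ℝ), t ∈ Set.Ioo (0:ℝ) 1 →
      F (quantile F t) = psi (closure (Set.range F)) t := by
  have h0 : (volume : Measure ℝ) {t ∈ Set.Ioo (0:ℝ) 1 |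
      psi (closure (Set.range F)) t ≠ F (quantile F t)} = 0 :=
    (bad_countable hF).measure_zero _
  rw [← compl_mem_ae_iff] at h0
  filter_upwards [h0] with t ht hto
  by_contra hne
  exact ht ⟨hto, fun h => hne h.symm⟩

/-- Half of the converse direction: a.e. equality forces range-closure inclusion. -/
lemma subset_of_ae (hF : IsCDF F) (hG : IsCDF G)
    (h : ∀ᵐ t ∂(volume.restrict (Set.Ioo (0:ℝ) 1)),
        F (quantile F t) = G (quantile G t)) :
    closure (Set.range F) ⊆ closure (Set.range G) := by
  intro x hx
  by_contra hxG
  have hx01 : x ∈ Set.Icc (0:ℝ) 1 := closure_subset hF hx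
  have hx0 : x ≠ 0 := fun h0 => hxG (h0 ▸ zero_mem hG)
  have hx1 : x ≠ 1 := fun h1 => hxG (h1 ▸ one_mem hG)
  have hx0' : 0 < x := lt_of_le_of_ne hx01.1 (Ne.symm hx0)
  have hx1' : x < 1 := lt_of_le_of_ne hx01.2 hx1
  -- find a ball around x missing closure (range G)
  obtain ⟨ε, hε, hball⟩ := Metric.isOpen_iff.1 (isOpen_compl_iff.2 isClosed_closure) x hxG
  set δ := min (ε / 2) (x / 2) with hδ
  have hδ0 : 0 < δ := lt_min (half_pos hε) (half_pos hx0')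
  have hδx : δ < x := (min_le_right _ _).trans_lt (half_lt_self hx0')
  have hδε : δ < ε := (min_le_left _ _).trans_lt (half_lt_self hε)
  -- a.e. t is not in Ioo (x - δ) x
  have hnI : ∀ᵐ t ∂(volume : Measure ℝ), t ∉ Set.Ioo (x - δ) x := by
    filter_upwards [ae_imp_of_ae_restrict h, ae_eq_psi hF] with t hteq htpsi htI
    have ht0 : 0 < t := by linarith [htI.1, sub_nonneg.2 hδx.le]
    have ht1 : t < 1 := htI.2.trans hx1'
    have htIoo : t ∈ Set.Ioo (0:ℝ) 1 := ⟨ht0, ht1⟩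
    have hFle : F (quantile F t) ≤ x := (htpsi htIoo) ▸ psi_le hx htI.2.le
    have hGmem := apply_quantile_mem hG ht0 ht1
    have hGball : G (quantile G t) ∉ Metric.ball x ε := fun hb => hball hb hGmem.1
    rw [Real.ball_eq_Ioo] at hGball
    have hGt : t ≤ G (quantile G t) := hGmem.2
    have htx : x - δ < t := htI.1
    have hGgt : x + ε ≤ G (quantile G t) := by
      by_contra hc
      push_neg at hc
      exact hGball ⟨by linarith, hc⟩
    have := hteq htIoo
    linarith
  have hl : (volume : Measure ℝ) (Set.Ioo (x - δ) x) = 0 := measure_eq_zero_iff_ae_notMem.2 hnI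
  rw [Real.volume_Ioo, ENNReal.ofReal_eq_zero] at hl
  linarith

end CDFAux

/-- The closures of the ranges of two CDFs coincide iff `F ∘ F⁻¹ = G ∘ G⁻¹`
Lebesgue-almost everywhere on `(0,1)`. -/
theorem closure_range_eq_iff_comp_quantile_ae_eq
    (F G : ℝ → ℝ) (hF : IsCDF F) (hG : IsCDF G) :
    closure (Set.range F) = closure (Set.range G) ↔
      ∀ᵐ t ∂(volume.restrict (Set.Ioo (0:ℝ) 1)),
        F (quantile F t) = G (quantile G t) := by
  constructor
  · intro h
    have h1 : ∀ᵐ t ∂(volume.restrict (Set.Ioo (0:ℝ) 1)), t ∈ Set.Ioo (0:ℝ) 1 →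
        F (quantile F t) = CDFAux.psi (closure (Set.range F)) t :=
      ae_restrict_of_ae (CDFAux.ae_eq_psi hF)
    have h2 : ∀ᵐ t ∂(volume.restrict (Set.Ioo (0:ℝ) 1)), t ∈ Set.Ioo (0:ℝ) 1 →
        G (quantile G t) = CDFAux.psi (closure (Set.range G)) t :=
      ae_restrict_of_ae (CDFAux.ae_eq_psi hG)
    filter_upwards [ae_restrict_mem measurableSet_Ioo, h1, h2] with t ht htF htG
    rw [htF ht, htG ht, h]
  · intro h
    exact le_antisymm (CDFAux.subset_of_ae hF hG h)
      (CDFAux.subset_of_ae hG hF (h.mono fun t ht => ht.symm))
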